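/- If for each n between 1 and N the columns of the nonnegative matrix M_{n-1,n} satisfy min_i M_{n-1,n}(i,k) / max_i M_{n-1,n}(i,k) ≥ δ_n for every column k, and v, w are any two columns of the product M_{0,N} = M_{0,1}M_{1,2}⋯M_{N-1,N}, then the volume-normalized directions of v and w (normalized so that the weighted sum with fixed positive weights equals 1) differ by at most ∏_{n=1}^{N}(1-δ_n) times the diameter of the simplex of normalized nonnegative vectors. -/

import Mathlib

open Finset

/-- The volume-normalized direction of a nonnegative vector: `v` divided by `∑ i, v i * vol i`. -/
noncomputable def direction {j : ℕ} (vol : Fin j → ℝ) (v : Fin j → ℝ) : Fin j → ℝ :=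
  (∑ i, v i * vol i)⁻¹ • v

theorem stmt_0 (j N : ℕ) (hj : 0 < j) (hN : 0 < N)
    (vol : Fin j → ℝ) (hvol : ∀ i, 0 < vol i)
    (M : ℕ → Matrix (Fin j) (Fin j) ℝ)
    (hMnn : ∀ n ∈ Finset.Icc 1 N, ∀ i k, 0 ≤ M n i k)
    (hMcol : ∀ n ∈ Finset.Icc 1 N, ∀ k, ∃ i, 0 < M n i k)
    (δ : ℕ → ℝ) (hδ0 : ∀ n, 0 ≤ δ n) (hδ1 : ∀ n, δ n ≤ 1)
    (hbal : ∀ n ∈ Finset.Icc 1 N, ∀ k i i', δ n * M n i k ≤ M n i' k)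
    (P : Matrix (Fin j) (Fin j) ℝ)
    (hP : P = ((List.range N).map (fun t => M (t + 1))).prod)
    (k l : Fin j) :
    ‖direction vol (fun i => P i k) - direction vol (fun i => P i l)‖ ≤
      (∏ n ∈ Finset.Icc 1 N, (1 - δ n)) *
        Metric.diam {ρ : Fin j → ℝ | (∀ i, 0 ≤ ρ i) ∧ ∑ i, ρ i * vol i = 1} := by
  haveI : Nonempty (Fin j) := ⟨⟨0, hj⟩⟩
  set S : Set (Fin j → ℝ) := {ρ : Fin j → ℝ | (∀ i, 0 ≤ ρ i) ∧ ∑ i, ρ i * vol i = 1} with hS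
  set Q : ℕ → Matrix (Fin j) (Fin j) ℝ :=
    fun n => ((List.range n).map (fun t => M (t + 1))).prod with hQdef
  have hQ0 : Q 0 = 1 := by simp [hQdef]
  have hQsucc : ∀ n, Q (n + 1) = Q n * M (n + 1) := by
    intro n
    simp only [hQdef]
    rw [List.range_succ, List.map_append, List.prod_append]
    simp
  have hQnn : ∀ n, n ≤ N → ∀ i k, 0 ≤ Q n i k := by
    intro n
    induction n with
    | zero =>
      intro _ i k
      rw [hQ0, Matrix.one_apply]
      split <;> norm_num
    | succ n ih =>
      intro hn i k
      rw [hQsucc, Matrix.mul_apply]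
      exact Finset.sum_nonneg fun m _ => mul_nonneg (ih (by omega) i m)
        (hMnn (n + 1) (Finset.mem_Icc.mpr ⟨by omega, hn⟩) m k)
  have hQpos : ∀ n, n ≤ N → ∀ k, ∃ i, 0 < Q n i k := by
    intro n
    induction n with
    | zero =>
      intro _ k
      exact ⟨k, by simp [hQ0, Matrix.one_apply]⟩
    | succ n ih =>
      intro hn k
      obtain ⟨m, hm⟩ := hMcol (n + 1) (Finset.mem_Icc.mpr ⟨by omega, hn⟩) k
      obtain ⟨i, hi⟩ := ih (by omega) m
      refine ⟨i, ?_⟩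
      rw [hQsucc, Matrix.mul_apply]
      have hle := Finset.single_le_sum (f := fun m' => Q n i m' * M (n + 1) m' k)
        (fun m' _ => mul_nonneg (hQnn n (by omega) i m')
          (hMnn (n + 1) (Finset.mem_Icc.mpr ⟨by omega, hn⟩) m' k)) (Finset.mem_univ m)
      exact lt_of_lt_of_le (mul_pos hi hm) hle
  set s : ℕ → Fin j → ℝ := fun n m => ∑ i, Q n i m * vol i with hsdef
  have hspos : ∀ n, n ≤ N → ∀ m, 0 < s n m := by
    intro n hn m
    obtain ⟨i, hi⟩ := hQpos n hn m
    exact Finset.sum_pos' (fun i' _ => mul_nonneg (hQnn n hn i' m) (hvol i').le)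
      ⟨i, Finset.mem_univ i, mul_pos hi (hvol i)⟩
  set u : ℕ → Fin j → (Fin j → ℝ) := fun n m => direction vol (fun i => Q n i m) with hudef
  have hu : ∀ n m i, u n m i = (s n m)⁻¹ * Q n i m := fun n m i => rfl
  -- boundedness of the simplex
  have hSbdd : Bornology.IsBounded S := by
    rw [isBounded_iff_forall_norm_le]
    refine ⟨Finset.univ.sup' Finset.univ_nonempty (fun i => (vol i)⁻¹), ?_⟩
    rintro ρ ⟨hρ0, hρ1⟩
    have hC0 : (0:ℝ) ≤ Finset.univ.sup' Finset.univ_nonempty (fun i => (vol i)⁻¹) :=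
      le_trans (inv_nonneg.mpr (hvol (Classical.arbitrary _)).le)
        (Finset.le_sup' (fun i => (vol i)⁻¹) (Finset.mem_univ (Classical.arbitrary _)))
    rw [pi_norm_le_iff_of_nonneg hC0]
    intro i
    have h1 : ρ i * vol i ≤ 1 := by
      rw [← hρ1]
      exact Finset.single_le_sum (fun i' _ => mul_nonneg (hρ0 i') (hvol i').le)
        (Finset.mem_univ i)
    have h2 : ρ i ≤ (vol i)⁻¹ := by
      rw [show (vol i)⁻¹ = 1 / vol i from (one_div _).symm, le_div_iff₀ (hvol i)]
      exact h1
    rw [Real.norm_eq_abs, abs_of_nonneg (hρ0 i)]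
    exact le_trans h2 (Finset.le_sup' (fun i => (vol i)⁻¹) (Finset.mem_univ i))
  have hdiam0 : 0 ≤ Metric.diam S := Metric.diam_nonneg
  -- key contraction claim
  have key : ∀ n, n ≤ N → ∀ ν ν' : Fin j → ℝ, (∀ m, 0 ≤ ν m) → (∑ m, ν m = 1) →
      (∀ m, 0 ≤ ν' m) → (∑ m, ν' m = 1) →
      ‖(∑ m, ν m • u n m) - (∑ m, ν' m • u n m)‖ ≤
        (∏ t ∈ Finset.Icc 1 n, (1 - δ t)) * Metric.diam S := by
    intro n
    induction n with
    | zero =>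
      intro _ ν ν' hν0 hν1 hν'0 hν'1
      have hs0 : ∀ m, s 0 m = vol m := by
        intro m
        simp [hsdef, hQ0, Matrix.one_apply, ite_mul]
      have hmem : ∀ μ : Fin j → ℝ, (∀ m, 0 ≤ μ m) → (∑ m, μ m = 1) →
          (∑ m, μ m • u 0 m) ∈ S := by
        intro μ hμ0 hμ1
        have hval : ∀ i, (∑ m, μ m • u 0 m) i = μ i * (vol i)⁻¹ := by
          intro i
          rw [Finset.sum_apply]
          have hterm : ∀ m, (μ m • u 0 m) i = if m = i then μ i * (vol i)⁻¹ else 0 := by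
            intro m
            simp only [Pi.smul_apply, smul_eq_mul, hu, hs0, hQ0, Matrix.one_apply]
            by_cases h : m = i
            · subst h; simp [mul_comm]
            · simp [h, Ne.symm h]
          rw [Finset.sum_congr rfl fun m _ => hterm m, Finset.sum_ite_eq' Finset.univ i]
          simp
        constructor
        · intro i
          rw [hval i]
          exact mul_nonneg (hμ0 i) (inv_nonneg.mpr (hvol i).le)
        · have : ∀ i ∈ Finset.univ, (∑ m, μ m • u 0 m) i * vol i = μ i := by
            intro i _
            rw [hval i, mul_assoc, inv_mul_cancel₀ (hvol i).ne', mul_one]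
          rw [Finset.sum_congr rfl this, hμ1]
      have h1 := hmem ν hν0 hν1
      have h2 := hmem ν' hν'0 hν'1
      rw [show Finset.Icc 1 0 = (∅ : Finset ℕ) from rfl]
      rw [Finset.prod_empty, one_mul, ← dist_eq_norm]
      exact Metric.dist_le_diam_of_mem hSbdd h1 h2
    | succ n ih =>
      intro hn ν ν' hν0 hν1 hν'0 hν'1
      have hnle : n ≤ N := by omega
      have hmemIcc : n + 1 ∈ Finset.Icc 1 N := Finset.mem_Icc.mpr ⟨by omega, hn⟩
      set Sp : ℝ := ∑ p, s n p with hSpdef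
      have hSp : 0 < Sp := Finset.sum_pos (fun p _ => hspos n hnle p) Finset.univ_nonempty
      set μ : Fin j → ℝ := fun m => s n m / Sp with hμdef
      have hμ0 : ∀ m, 0 ≤ μ m := fun m => div_nonneg (hspos n hnle m).le hSp.le
      have hμ1 : ∑ m, μ m = 1 := by
        rw [hμdef, ← Finset.sum_div, div_self hSp.ne']
      set lam : Fin j → Fin j → ℝ :=
        fun kk m => M (n + 1) m kk * s n m / s (n + 1) kk with hlamdef
      have hs' : ∀ kk, s (n + 1) kk = ∑ m, M (n + 1) m kk * s n m := by
        intro kk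
        simp only [hsdef, hQsucc, Matrix.mul_apply, Finset.sum_mul]
        rw [Finset.sum_comm]
        refine Finset.sum_congr rfl fun m _ => ?_
        rw [Finset.mul_sum]
        refine Finset.sum_congr rfl fun i _ => ?_
        ring
      have hlam0 : ∀ kk m, 0 ≤ lam kk m := fun kk m =>
        div_nonneg (mul_nonneg (hMnn (n + 1) hmemIcc m kk) (hspos n hnle m).le)
          (hspos (n + 1) hn kk).le
      have hlam1 : ∀ kk, ∑ m, lam kk m = 1 := by
        intro kk
        rw [hlamdef]
        simp only
        rw [← Finset.sum_div, ← hs' kk, div_self (hspos (n + 1) hn kk).ne']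
      have hlamlb : ∀ kk m, δ (n + 1) * μ m ≤ lam kk m := by
        intro kk m
        have hkey : δ (n + 1) * s (n + 1) kk ≤ M (n + 1) m kk * Sp := by
          rw [hs' kk, Finset.mul_sum, hSpdef, Finset.mul_sum]
          refine Finset.sum_le_sum fun p _ => ?_
          rw [← mul_assoc]
          exact mul_le_mul_of_nonneg_right (hbal (n + 1) hmemIcc kk p m) (hspos n hnle p).le
        rw [hμdef, hlamdef]
        simp only
        rw [mul_div_assoc' (δ (n + 1)), div_le_div_iff₀ hSp (hspos (n + 1) hn kk)]
        nlinarith [mul_le_mul_of_nonneg_right hkey (hspos n hnle m).le]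
      have hcolu : ∀ kk, u (n + 1) kk = ∑ m, lam kk m • u n m := by
        intro kk
        funext i
        rw [Finset.sum_apply]
        simp only [Pi.smul_apply, smul_eq_mul, hu, hlamdef]
        rw [hQsucc, Matrix.mul_apply, Finset.mul_sum]
        refine Finset.sum_congr rfl fun m _ => ?_
        have h1 := (hspos n hnle m).ne'
        have h2 := (hspos (n + 1) hn kk).ne'
        field_simp
      set B : (Fin j → ℝ) → Fin j → ℝ := fun w m => ∑ kk, w kk * lam kk m with hBdef
      have hBu : ∀ w : Fin j → ℝ, (∑ kk, w kk • u (n + 1) kk) = ∑ m, B w m • u n m := by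
        intro w
        calc (∑ kk, w kk • u (n + 1) kk)
            = ∑ kk, ∑ m, (w kk * lam kk m) • u n m := by
              refine Finset.sum_congr rfl fun kk _ => ?_
              rw [hcolu kk, Finset.smul_sum]
              refine Finset.sum_congr rfl fun m _ => ?_
              rw [smul_smul]
          _ = ∑ m, B w m • u n m := by
              rw [Finset.sum_comm]
              refine Finset.sum_congr rfl fun m _ => ?_
              rw [hBdef]
              simp only
              rw [Finset.sum_smul]
      have hBsum : ∀ w : Fin j → ℝ, (∑ m, w m = 1) → ∑ m, B w m = 1 := by
        intro w hw
        rw [hBdef]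
        simp only
        rw [Finset.sum_comm]
        calc (∑ kk, ∑ m, w kk * lam kk m) = ∑ kk, w kk := by
              refine Finset.sum_congr rfl fun kk _ => ?_
              rw [← Finset.mul_sum, hlam1 kk, mul_one]
          _ = 1 := hw
      have hBlb : ∀ w : Fin j → ℝ, (∀ m, 0 ≤ w m) → (∑ m, w m = 1) →
          ∀ m, δ (n + 1) * μ m ≤ B w m := by
        intro w hw0 hw1 m
        have : ∑ kk, w kk * (δ (n + 1) * μ m) ≤ ∑ kk, w kk * lam kk m :=
          Finset.sum_le_sum fun kk _ =>
            mul_le_mul_of_nonneg_left (hlamlb kk m) (hw0 kk)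
        rwa [← Finset.sum_mul, hw1, one_mul] at this
      have hB0 : ∀ w : Fin j → ℝ, (∀ m, 0 ≤ w m) → ∀ m, 0 ≤ B w m := fun w hw0 m =>
        Finset.sum_nonneg fun kk _ => mul_nonneg (hw0 kk) (hlam0 kk m)
      rw [Finset.prod_Icc_succ_top (by omega : 1 ≤ n + 1)]
      rcases eq_or_lt_of_le (hδ1 (n + 1)) with heq | hlt
      · -- δ (n+1) = 1 : the combination is forced, difference is zero
        have hBeq : ∀ w : Fin j → ℝ, (∀ m, 0 ≤ w m) → (∑ m, w m = 1) → B w = μ := by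
          intro w hw0 hw1
          funext m
          have hle : ∀ m' ∈ Finset.univ, μ m' ≤ B w m' := by
            intro m' _
            have := hBlb w hw0 hw1 m'
            rwa [heq, one_mul] at this
          have hsum : ∑ m' , μ m' = ∑ m', B w m' := by rw [hμ1, hBsum w hw1]
          have := (Finset.sum_eq_sum_iff_of_le hle).mp hsum m (Finset.mem_univ m)
          exact this.symm
        rw [hBu ν, hBu ν', hBeq ν hν0 hν1, hBeq ν' hν'0 hν'1, sub_self, norm_zero]
        rw [← heq]
        have : (∏ t ∈ Finset.Icc 1 n, (1 - δ t)) * (1 - δ (n + 1)) * Metric.diam S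
            = (∏ t ∈ Finset.Icc 1 n, (1 - δ t)) * Metric.diam S * (1 - δ (n + 1)) := by ring
        rw [heq] at this ⊢
        simp [this]
      · -- δ (n+1) < 1
        have hd : (0:ℝ) < 1 - δ (n + 1) := by linarith
        set α : Fin j → ℝ := fun m => (B ν m - δ (n + 1) * μ m) / (1 - δ (n + 1)) with hαdef
        set α' : Fin j → ℝ := fun m => (B ν' m - δ (n + 1) * μ m) / (1 - δ (n + 1)) with hα'def
        have hα0 : ∀ m, 0 ≤ α m := fun m =>
          div_nonneg (by linarith [hBlb ν hν0 hν1 m]) hd.le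
        have hα'0 : ∀ m, 0 ≤ α' m := fun m =>
          div_nonneg (by linarith [hBlb ν' hν'0 hν'1 m]) hd.le
        have hαsum : ∑ m, α m = 1 := by
          rw [hαdef]
          simp only
          rw [← Finset.sum_div, Finset.sum_sub_distrib, ← Finset.mul_sum, hμ1,
            hBsum ν hν1, mul_one, div_self hd.ne']
        have hα'sum : ∑ m, α' m = 1 := by
          rw [hα'def]
          simp only
          rw [← Finset.sum_div, Finset.sum_sub_distrib, ← Finset.mul_sum, hμ1,
            hBsum ν' hν'1, mul_one, div_self hd.ne']
        have hdiff : (∑ m, ν m • u (n + 1) m) - (∑ m, ν' m • u (n + 1) m)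
            = (1 - δ (n + 1)) • ((∑ m, α m • u n m) - (∑ m, α' m • u n m)) := by
          rw [hBu ν, hBu ν', smul_sub, Finset.smul_sum, Finset.smul_sum,
            ← Finset.sum_sub_distrib, ← Finset.sum_sub_distrib]
          refine Finset.sum_congr rfl fun m _ => ?_
          rw [← sub_smul, smul_smul, smul_smul, ← sub_smul]
          congr 1
          rw [hαdef, hα'def]
          field_simp
          ring
        rw [hdiff, norm_smul, Real.norm_eq_abs, abs_of_nonneg hd.le]
        have hIH := ih hnle α α' hα0 hαsum hα'0 hα'sum
        calc (1 - δ (n + 1)) * ‖(∑ m, α m • u n m) - (∑ m, α' m • u n m)‖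
            ≤ (1 - δ (n + 1)) * ((∏ t ∈ Finset.Icc 1 n, (1 - δ t)) * Metric.diam S) :=
              mul_le_mul_of_nonneg_left hIH hd.le
          _ = (∏ t ∈ Finset.Icc 1 n, (1 - δ t)) * (1 - δ (n + 1)) * Metric.diam S := by ring
  -- conclude
  have hPQ : P = Q N := by rw [hQdef]; exact hP
  have hone : ∀ k0 : Fin j, ∑ m, (if m = k0 then (1:ℝ) else 0) = 1 := by
    intro k0; simp
  have hrep : ∀ k0 : Fin j, direction vol (fun i => Q N i k0)
      = ∑ m, (if m = k0 then (1:ℝ) else 0) • u N m := by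
    intro k0
    simp [ite_smul, hudef]
  rw [hPQ, hrep k, hrep l]
  exact key N le_rfl _ _ (fun m => by split <;> norm_num) (hone k)
    (fun m => by split <;> norm_num) (hone l)
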